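/- Let Π be a ground logic program over atoms A with rules indexed by a finite type R, and let T(Π) be its transformed program over the atom type A ⊎ R. If M ⊆ A is a supported model of Π, then M' = M ∪ { dm_r : r ∈ R, the body of rule r is false in M } is a stable model of T(Π). -/
import Mathlib


/-- A ground rule: head ← body⁺, not body⁻. -/
structure Rule (A : Type*) where
  head : A
  bodyPos : Finset A
  bodyNeg : Finset A
deriving DecidableEq

/-- The body of rule `r` is true in interpretation `M`:
`body⁺(r) ⊆ M` and `body⁻(r) ∩ M = ∅`. -/
def BodyTrue {A : Type*} (M : Set A) (r : Rule A) : Prop :=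
  ↑r.bodyPos ⊆ M ∧ ∀ a ∈ r.bodyNeg, a ∉ M

/-- `M` is a model of the program `P` (a family of rules indexed by `R`). -/
def IsModel {A R : Type*} (P : R → Rule A) (M : Set A) : Prop :=
  ∀ r, BodyTrue M (P r) → (P r).head ∈ M

/-- `M` is a supported model of `P`: a model in which every true atom
is the head of some rule of `P` whose body is true in `M`. -/
def IsSupported {A R : Type*} (P : R → Rule A) (M : Set A) : Prop :=
  IsModel P M ∧ ∀ a ∈ M, ∃ r, (P r).head = a ∧ ↑(P r).bodyPos ⊆ M ∧
    ∀ b ∈ (P r).bodyNeg, b ∉ M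

/-- `N` is a model of the Gelfond–Lifschitz reduct `P^M`: for every rule of `P`
surviving the reduct (i.e. with `body⁻(r) ∩ M = ∅`), whose negative literals are
removed, if its positive body holds in `N` then so does its head. -/
def ReductModel {A R : Type*} (P : R → Rule A) (M N : Set A) : Prop :=
  ∀ r, (∀ a ∈ (P r).bodyNeg, a ∉ M) → ↑(P r).bodyPos ⊆ N → (P r).head ∈ N

/-- `M` is a stable model of `P`: `M` is the least model of the reduct `P^M`. -/
def IsStable {A R : Type*} (P : R → Rule A) (M : Set A) : Prop :=
  ReductModel P M M ∧ ∀ N, ReductModel P M N → M ⊆ N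

/-- Index type for the rules of the transformed program `T(P)`: one rule
`head(r) ← not dm_r` per rule `r`, one rule `dm_r ← not l` per `l ∈ body⁺(r)`,
and one rule `dm_r ← l` per `l ∈ body⁻(r)`. -/
abbrev TransIdx {A R : Type*} (P : R → Rule A) : Type _ :=
  R ⊕ ((Σ r : R, {l // l ∈ (P r).bodyPos}) ⊕ (Σ r : R, {l // l ∈ (P r).bodyNeg}))

/-- The transformed program `T(P)` over atoms `A ⊕ R`, where `Sum.inr r`
plays the role of the fresh auxiliary atom `dm_r`. -/
def Transform {A R : Type*} (P : R → Rule A) : TransIdx P → Rule (A ⊕ R)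
  | Sum.inl r => ⟨Sum.inl (P r).head, ∅, {Sum.inr r}⟩
  | Sum.inr (Sum.inl ⟨r, l⟩) => ⟨Sum.inr r, ∅, {Sum.inl l.1}⟩
  | Sum.inr (Sum.inr ⟨r, l⟩) => ⟨Sum.inr r, {Sum.inl l.1}, ∅⟩

/-- `Lift P M = M ∪ { dm_r | the body of rule r is false in M }`,
viewing `M ⊆ A` as a subset of `A ⊕ R` via the left injection. -/
def Lift {A R : Type*} (P : R → Rule A) (M : Set A) : Set (A ⊕ R) :=
  Sum.inl '' M ∪ Sum.inr '' {r | ¬ BodyTrue M (P r)}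

/-- If `M` is a supported model of `P`, then
`M' = M ∪ { dm_r | body of r is false in M }` is a stable model of `T(P)`. -/
theorem supported_model_gives_stable_model_of_transform
    {A R : Type*} [Fintype R] (P : R → Rule A) (M : Set A)
    (h : IsSupported P M) : IsStable (Transform P) (Lift P M) := by
  obtain ⟨hmod, hsup⟩ := h
  have hinl : ∀ a : A, Sum.inl a ∈ Lift P M ↔ a ∈ M := by
    intro a; simp [Lift]
  have hinr : ∀ r : R, Sum.inr r ∈ Lift P M ↔ ¬ BodyTrue M (P r) := by
    intro r; simp [Lift]
  constructor
  · intro i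
    match i with
    | Sum.inl r =>
      intro hneg _
      simp only [Transform] at *
      have hbt : BodyTrue M (P r) := by
        by_contra hb
        exact hneg (Sum.inr r) (by simp) ((hinr r).2 hb)
      exact (hinl _).2 (hmod r hbt)
    | Sum.inr (Sum.inl ⟨r, l, hl⟩) =>
      intro hneg _
      simp only [Transform] at *
      have hlM : l ∉ M := fun hM => hneg (Sum.inl l) (by simp) ((hinl l).2 hM)
      exact (hinr r).2 fun ⟨hp, _⟩ => hlM (hp hl)
    | Sum.inr (Sum.inr ⟨r, l, hl⟩) =>
      intro _ hpos
      simp only [Transform] at *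
      have hlM : l ∈ M := (hinl l).1 (hpos (by simp))
      exact (hinr r).2 fun ⟨_, hn⟩ => hn l hl hlM
  · intro N hN x hx
    have hMN : ∀ a ∈ M, Sum.inl a ∈ N := by
      intro a ha
      obtain ⟨r, hhead, hp, hn⟩ := hsup a ha
      have := hN (Sum.inl r) ?_ ?_
      · simpa [Transform, hhead] using this
      · intro b hb
        simp only [Transform, Finset.mem_singleton] at hb
        subst hb
        rw [hinr r]
        exact not_not_intro ⟨hp, hn⟩
      · simp [Transform]
    rcases hx with ⟨a, ha, rfl⟩ | ⟨r, hr, rfl⟩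
    · exact hMN a ha
    · rcases not_and_or.mp hr with hp | hn
      · obtain ⟨l, hl, hlM⟩ := Set.not_subset.mp hp
        have := hN (Sum.inr (Sum.inl ⟨r, l, hl⟩)) ?_ ?_
        · simpa [Transform] using this
        · intro b hb
          simp only [Transform, Finset.mem_singleton] at hb
          subst hb
          rw [hinl l]; exact hlM
        · simp [Transform]
      · push_neg at hn
        obtain ⟨l, hl, hlM⟩ := hn
        have := hN (Sum.inr (Sum.inr ⟨r, l, hl⟩)) ?_ ?_
        · simpa [Transform] using this
        · simp [Transform]
        · intro b hb
          simp only [Transform, Finset.coe_singleton, Set.mem_singleton_iff] at hb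
          subst hb
          exact hMN l hlM
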